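/- Let H be a compact group with irreducible unitary representations π_k : H → SU(d_k) for k = 1,…,N. If a unit vector Ψ ∈ ℂ^{d₁} ⊗ ⋯ ⊗ ℂ^{d_N} satisfies (π₁(h) ⊗ ⋯ ⊗ π_N(h)) Ψ = Ψ for all h ∈ H, then every single-site reduced density matrix ρ_k of Ψ equals (1/d_k)·Id; i.e. Ψ is locally maximally entangled. -/

import Mathlib

open Matrix

/-- The action of a tuple of local matrices `g k` on the tensor product
`ℂ^{d 0} ⊗ ⋯ ⊗ ℂ^{d (N-1)}`, realised as the function space `(∀ k, Fin (d k)) → ℂ`. -/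
noncomputable def hAct {N : ℕ} {d : Fin N → ℕ}
    (g : ∀ k, Matrix (Fin (d k)) (Fin (d k)) ℂ) (Ψ : (∀ k, Fin (d k)) → ℂ) :
    (∀ k, Fin (d k)) → ℂ :=
  fun x => ∑ y : ∀ k, Fin (d k), (∏ k, g k (x k) (y k)) * Ψ y

/-- The `k`-th single-site reduced density matrix of a state `Ψ` in the tensor product,
obtained by tracing out all other sites. -/
noncomputable def rho {N : ℕ} {d : Fin N → ℕ} (Ψ : (∀ k, Fin (d k)) → ℂ) (k : Fin N) :
    Matrix (Fin (d k)) (Fin (d k)) ℂ :=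
  fun a b => ∑ x : ∀ j, Fin (d j),
    if x k = a then Ψ x * (starRingEnd ℂ) (Ψ (Function.update x k b)) else 0

variable {N : ℕ} {d : Fin N → ℕ} (k : Fin N)

noncomputable abbrev eSplit : (∀ j, Fin (d j)) ≃ Fin (d k) × ∀ j : {j // j ≠ k}, Fin (d j.1) :=
  Equiv.piSplitAt k (fun j => Fin (d j))

lemma eSplit_symm_self (c : Fin (d k)) (t : ∀ j : {j // j ≠ k}, Fin (d j.1)) :
    (eSplit k).symm (c, t) k = c := by simp [eSplit, Equiv.piSplitAt]

lemma eSplit_symm_ne (c : Fin (d k)) (t : ∀ j : {j // j ≠ k}, Fin (d j.1))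
    (j : Fin N) (h : j ≠ k) : (eSplit k).symm (c, t) j = t ⟨j, h⟩ := by
  simp [eSplit, Equiv.piSplitAt, h]

lemma update_eSplit (c b : Fin (d k)) (t : ∀ j : {j // j ≠ k}, Fin (d j.1)) :
    Function.update ((eSplit k).symm (c, t)) k b = (eSplit k).symm (b, t) := by
  ext j
  rcases eq_or_ne j k with rfl | h
  · simp [eSplit_symm_self]
  · simp [Function.update, h, eSplit_symm_ne _ _ _ _ h]

lemma rho_eq (Ψ : (∀ j, Fin (d j)) → ℂ) (a b : Fin (d k)) :
    rho Ψ k a b = ∑ t : ∀ j : {j // j ≠ k}, Fin (d j.1),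
      Ψ ((eSplit k).symm (a, t)) * (starRingEnd ℂ) (Ψ ((eSplit k).symm (b, t))) := by
  rw [rho, ← Equiv.sum_comp (eSplit k).symm
    (fun x => if x k = a then Ψ x * (starRingEnd ℂ) (Ψ (Function.update x k b)) else 0)]
  rw [Fintype.sum_prod_type]
  rw [Finset.sum_comm]
  simp only [eSplit_symm_self, update_eSplit]
  simp [Finset.sum_ite_eq]

lemma eSplit_symm_fst (p : Fin (d k) × ∀ j : {j // j ≠ k}, Fin (d j.1)) :
    (eSplit k).symm p k = p.1 := by obtain ⟨c, t⟩ := p; exact eSplit_symm_self k c t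

lemma eSplit_symm_snd (p : Fin (d k) × ∀ j : {j // j ≠ k}, Fin (d j.1))
    (j : Fin N) (h : j ≠ k) : (eSplit k).symm p j = p.2 ⟨j, h⟩ := by
  obtain ⟨c, t⟩ := p; exact eSplit_symm_ne k c t j h

lemma prod_split (F : Fin N → ℂ) : ∏ j, F j = F k * ∏ j : {j // j ≠ k}, F j.1 := by
  rw [Fintype.prod_eq_mul_prod_compl k F]
  congr 1
  exact (Finset.prod_subtype (p := fun j => j ≠ k) {k}ᶜ (fun x => by simp) F)

lemma hAct_eSplit (g : ∀ j, Matrix (Fin (d j)) (Fin (d j)) ℂ) (Ψ : (∀ j, Fin (d j)) → ℂ)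
    (c : Fin (d k)) (t : ∀ j : {j // j ≠ k}, Fin (d j.1)) :
    hAct g Ψ ((eSplit k).symm (c, t)) = ∑ p : Fin (d k) × (∀ j : {j // j ≠ k}, Fin (d j.1)),
      (g k c p.1 * ∏ j : {j // j ≠ k}, g j.1 (t j) (p.2 j)) * Ψ ((eSplit k).symm p) := by
  rw [hAct, ← Equiv.sum_comp (eSplit k).symm
    (fun y => (∏ j, g j ((eSplit k).symm (c, t) j) (y j)) * Ψ y)]
  refine Finset.sum_congr rfl fun p _ => ?_
  congr 1
  rw [prod_split k]
  congr 1
  · rw [eSplit_symm_fst, eSplit_symm_fst]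
  · refine Finset.prod_congr rfl fun j _ => ?_
    rw [eSplit_symm_snd _ _ _ j.2, eSplit_symm_snd _ _ _ j.2]

lemma ortho (g : ∀ j, Matrix (Fin (d j)) (Fin (d j)) ℂ)
    (hg : ∀ j, (g j)ᴴ * g j = 1)
    (s s' : ∀ j : {j // j ≠ k}, Fin (d j.1)) :
    ∑ t : ∀ j : {j // j ≠ k}, Fin (d j.1),
      (∏ j : {j // j ≠ k}, g j.1 (t j) (s j)) *
        (starRingEnd ℂ) (∏ j : {j // j ≠ k}, g j.1 (t j) (s' j))
      = if s' = s then 1 else 0 := by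
  have h1 : ∀ t : ∀ j : {j // j ≠ k}, Fin (d j.1),
      (∏ j : {j // j ≠ k}, g j.1 (t j) (s j)) *
        (starRingEnd ℂ) (∏ j : {j // j ≠ k}, g j.1 (t j) (s' j))
      = ∏ j : {j // j ≠ k}, (g j.1 (t j) (s j) * (starRingEnd ℂ) (g j.1 (t j) (s' j))) := by
    intro t; rw [map_prod, ← Finset.prod_mul_distrib]
  simp_rw [h1]
  rw [← Fintype.piFinset_univ, ← Finset.prod_univ_sum
    (fun j : {j // j ≠ k} => (Finset.univ : Finset (Fin (d j.1))))
    (fun j m => g j.1 m (s j) * (starRingEnd ℂ) (g j.1 m (s' j)))]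
  have hfac : ∀ j : {j // j ≠ k},
      (∑ m, g j.1 m (s j) * (starRingEnd ℂ) (g j.1 m (s' j)))
        = ((g j.1)ᴴ * g j.1) (s' j) (s j) := by
    intro j
    rw [Matrix.mul_apply]
    refine Finset.sum_congr rfl fun m _ => ?_
    rw [Matrix.conjTranspose_apply]
    simp [mul_comm]
  simp_rw [hfac, hg]
  rcases eq_or_ne s' s with rfl | h
  · simp [Matrix.one_apply]
  · rw [if_neg h]
    obtain ⟨j, hj⟩ := Function.ne_iff.mp h
    exact Finset.prod_eq_zero (Finset.mem_univ j) (by simp [Matrix.one_apply, hj])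

lemma rho_hAct (g : ∀ j, Matrix (Fin (d j)) (Fin (d j)) ℂ) (hg : ∀ j, (g j)ᴴ * g j = 1)
    (Ψ : (∀ j, Fin (d j)) → ℂ) :
    rho (hAct g Ψ) k = g k * rho Ψ k * (g k)ᴴ := by
  classical
  ext a b
  set P := ∀ j : {j // j ≠ k}, Fin (d j.1) with hP
  set es : Fin (d k) × P → (∀ j, Fin (d j)) := fun p => (eSplit k).symm p with hes
  set Q : P → P → ℂ := fun t s => ∏ j : {j // j ≠ k}, g j.1 (t j) (s j) with hQ
  set C : Fin (d k) × P → Fin (d k) × P → ℂ := fun p q =>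
    g k a p.1 * Ψ (es p) * (starRingEnd ℂ) (g k b q.1) * (starRingEnd ℂ) (Ψ (es q)) with hC
  calc rho (hAct g Ψ) k a b
      = ∑ t : P, (∑ p : Fin (d k) × P, (g k a p.1 * Q t p.2) * Ψ (es p)) *
          (starRingEnd ℂ) (∑ q : Fin (d k) × P, (g k b q.1 * Q t q.2) * Ψ (es q)) := by
        rw [rho_eq]
        refine Finset.sum_congr rfl fun t _ => ?_
        rw [hAct_eSplit, hAct_eSplit]
    _ = ∑ t : P, ∑ p : Fin (d k) × P, ∑ q : Fin (d k) × P,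
          ((g k a p.1 * Q t p.2) * Ψ (es p)) *
            (((starRingEnd ℂ) (g k b q.1) * (starRingEnd ℂ) (Q t q.2)) *
              (starRingEnd ℂ) (Ψ (es q))) := by
        refine Finset.sum_congr rfl fun t _ => ?_
        rw [map_sum, Finset.sum_mul_sum]
        exact Finset.sum_congr rfl fun p _ => Finset.sum_congr rfl fun q _ => by
          rw [_root_.map_mul, _root_.map_mul]
    _ = ∑ p : Fin (d k) × P, ∑ q : Fin (d k) × P, ∑ t : P,
          ((g k a p.1 * Q t p.2) * Ψ (es p)) *
            (((starRingEnd ℂ) (g k b q.1) * (starRingEnd ℂ) (Q t q.2)) *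
              (starRingEnd ℂ) (Ψ (es q))) := by
        rw [Finset.sum_comm]
        exact Finset.sum_congr rfl fun p _ => Finset.sum_comm
    _ = ∑ p : Fin (d k) × P, ∑ q : Fin (d k) × P,
          C p q * (if q.2 = p.2 then 1 else 0) := by
        refine Finset.sum_congr rfl fun p _ => Finset.sum_congr rfl fun q _ => ?_
        rw [← ortho k g hg p.2 q.2, Finset.mul_sum]
        exact Finset.sum_congr rfl fun t _ => by rw [hQ, hC]; ring
    _ = ∑ p : Fin (d k) × P, ∑ c' : Fin (d k), C p (c', p.2) := by
        refine Finset.sum_congr rfl fun p _ => ?_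
        rw [Fintype.sum_prod_type]
        refine Finset.sum_congr rfl fun c' _ => ?_
        simp only [mul_ite, mul_one, mul_zero, Finset.sum_ite_eq', Finset.mem_univ, if_true]
        convert (Finset.sum_ite_eq' Finset.univ p.2 (fun x => C p (c', x))).trans (if_pos (Finset.mem_univ _))
    _ = ∑ c : Fin (d k), ∑ s : P, ∑ c' : Fin (d k), C (c, s) (c', s) :=
        Fintype.sum_prod_type _
    _ = ∑ c : Fin (d k), ∑ c' : Fin (d k), ∑ s : P, C (c, s) (c', s) :=
        Finset.sum_congr rfl fun c _ => Finset.sum_comm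
    _ = ∑ c' : Fin (d k), ∑ c : Fin (d k), ∑ s : P, C (c, s) (c', s) :=
        Finset.sum_comm
    _ = (g k * rho Ψ k * (g k)ᴴ) a b := by
        rw [Matrix.mul_apply]
        refine Finset.sum_congr rfl fun c' _ => ?_
        rw [Matrix.mul_apply, Finset.sum_mul]
        refine Finset.sum_congr rfl fun c _ => ?_
        rw [rho_eq, Matrix.conjTranspose_apply, Finset.mul_sum, Finset.sum_mul]
        refine Finset.sum_congr rfl fun s _ => ?_
        rw [hC, ← starRingEnd_apply]
        ring

lemma schur {H : Type} [Group H] {n : ℕ} [Nontrivial (Fin n → ℂ)]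
    (π : H →* Matrix.specialUnitaryGroup (Fin n) ℂ)
    (hirr : ∀ W : Submodule ℂ (Fin n → ℂ),
      (∀ h : H, ∀ v ∈ W, Matrix.mulVec (π h : Matrix (Fin n) (Fin n) ℂ) v ∈ W) →
        W = ⊥ ∨ W = ⊤)
    (M : Matrix (Fin n) (Fin n) ℂ)
    (hM : ∀ h : H, (π h : Matrix (Fin n) (Fin n) ℂ) * M = M * (π h : Matrix (Fin n) (Fin n) ℂ)) :
    ∃ c : ℂ, M = c • (1 : Matrix (Fin n) (Fin n) ℂ) := by
  obtain ⟨μ, hμ⟩ := Module.End.exists_eigenvalue (Matrix.mulVecLin M)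
  set W := Module.End.eigenspace (Matrix.mulVecLin M) μ with hW
  have hWinv : ∀ h : H, ∀ v ∈ W, Matrix.mulVec (π h : Matrix (Fin n) (Fin n) ℂ) v ∈ W := by
    intro h v hv
    rw [hW, Module.End.mem_eigenspace_iff] at hv ⊢
    simp only [Matrix.mulVecLin_apply] at hv ⊢
    rw [Matrix.mulVec_mulVec, ← hM, ← Matrix.mulVec_mulVec, hv, Matrix.mulVec_smul]
  rcases hirr W hWinv with hbot | htop
  · exact absurd hbot hμ
  · refine ⟨μ, ?_⟩
    ext i j
    have : M.mulVec (Pi.single j 1) = μ • (Pi.single j 1 : Fin n → ℂ) := by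
      have := htop ▸ Submodule.mem_top (R := ℂ) (M := Fin n → ℂ) (x := Pi.single j 1)
      rw [hW, Module.End.mem_eigenspace_iff] at this
      simpa using this
    have h2 := congrFun this i
    simp only [Matrix.mulVec_single, MulOpposite.op_one, one_smul, Matrix.col_apply, mul_one, Pi.smul_apply] at h2
    rw [h2]
    by_cases hij : i = j <;> simp [hij, Matrix.one_apply, Pi.single_apply]

/-- Let `H` be a compact group with irreducible unitary representations
`π k : H → SU(d k)`.  If a unit vector `Ψ ∈ ℂ^{d 0} ⊗ ⋯ ⊗ ℂ^{d (N-1)}` satisfies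
`(π 0 h ⊗ ⋯ ⊗ π (N-1) h) Ψ = Ψ` for all `h ∈ H`, then every single-site reduced density
matrix of `Ψ` is maximally mixed, `ρ_k = (1 / d k) • 1`; i.e. `Ψ` is locally maximally
entangled. -/
theorem diagonal_symmetry_implies_LME {H : Type} [Group H] [TopologicalSpace H]
    [IsTopologicalGroup H] [CompactSpace H] (N : ℕ) (d : Fin N → ℕ)
    (π : ∀ k, H →* Matrix.specialUnitaryGroup (Fin (d k)) ℂ)
    (hcont : ∀ k, Continuous fun h => ((π k h : Matrix (Fin (d k)) (Fin (d k)) ℂ)))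
    (hirr : ∀ k, ∀ W : Submodule ℂ (Fin (d k) → ℂ),
      (∀ h : H, ∀ v ∈ W, Matrix.mulVec (π k h : Matrix (Fin (d k)) (Fin (d k)) ℂ) v ∈ W) →
        W = ⊥ ∨ W = ⊤)
    (Ψ : (∀ k, Fin (d k)) → ℂ)
    (hunit : ∑ x : ∀ k, Fin (d k), Complex.normSq (Ψ x) = 1)
    (hinv : ∀ h : H, hAct (fun k => (π k h : Matrix (Fin (d k)) (Fin (d k)) ℂ)) Ψ = Ψ) :
    ∀ k, rho Ψ k = ((d k : ℂ))⁻¹ • (1 : Matrix (Fin (d k)) (Fin (d k)) ℂ) := by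
  classical
  have hne : Nonempty (∀ j, Fin (d j)) := by
    by_contra h
    rw [not_nonempty_iff] at h
    rw [Finset.univ_eq_empty, Finset.sum_empty] at hunit
    exact zero_ne_one hunit
  intro k
  haveI : Nonempty (Fin (d k)) := ⟨hne.some k⟩
  haveI : Nontrivial (Fin (d k) → ℂ) := inferInstance
  -- the commutation relation
  have hM : ∀ h : H, (π k h : Matrix (Fin (d k)) (Fin (d k)) ℂ) * rho Ψ k
      = rho Ψ k * (π k h : Matrix (Fin (d k)) (Fin (d k)) ℂ) := by
    intro h
    set g : ∀ j, Matrix (Fin (d j)) (Fin (d j)) ℂ :=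
      fun j => (π j h : Matrix (Fin (d j)) (Fin (d j)) ℂ) with hgdef
    have hg : ∀ j, (g j)ᴴ * g j = 1 := by
      intro j
      have := ((Matrix.mem_specialUnitaryGroup_iff.mp (π j h).2).1)
      rw [Matrix.mem_unitaryGroup_iff'] at this
      rw [← Matrix.star_eq_conjTranspose]
      exact this
    have h1 : rho Ψ k = g k * rho Ψ k * (g k)ᴴ := by
      conv_lhs => rw [← hinv h]
      exact rho_hAct k g hg Ψ
    conv_rhs => rw [h1]
    rw [mul_assoc (g k * rho Ψ k), hg k, mul_one]
  obtain ⟨c, hc⟩ := schur (π k) (hirr k) (rho Ψ k) hM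
  -- compute the trace of rho
  have htr : Matrix.trace (rho Ψ k) = 1 := by
    rw [Matrix.trace]
    have : ∀ a : Fin (d k), Matrix.diag (rho Ψ k) a
        = ∑ x : ∀ j, Fin (d j), if x k = a then Ψ x * (starRingEnd ℂ) (Ψ x) else 0 := by
      intro a
      rw [Matrix.diag_apply, rho]
      refine Finset.sum_congr rfl fun x _ => ?_
      rcases eq_or_ne (x k) a with hxa | hxa
      · rw [if_pos hxa, if_pos hxa, ← hxa, Function.update_eq_self]
      · rw [if_neg hxa, if_neg hxa]
    simp_rw [this]
    rw [Finset.sum_comm]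
    have : ∀ x : ∀ j, Fin (d j),
        (∑ a : Fin (d k), if x k = a then Ψ x * (starRingEnd ℂ) (Ψ x) else 0)
          = (Complex.normSq (Ψ x) : ℂ) := by
      intro x
      simp_rw [eq_comm (a := x k)]
      rw [Finset.sum_ite_eq', if_pos (Finset.mem_univ _), Complex.mul_conj]
    simp_rw [this]
    rw [← Complex.ofReal_sum, hunit, Complex.ofReal_one]
  have hd : (d k : ℂ) ≠ 0 := by
    have : 0 < d k := Fin.pos_iff_nonempty.mpr ‹Nonempty (Fin (d k))›
    exact_mod_cast this.ne'
  have hcval : c * (d k : ℂ) = 1 := by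
    rw [hc, Matrix.trace_smul, Matrix.trace_one] at htr
    simpa [Fintype.card_fin, smul_eq_mul] using htr
  have : c = ((d k : ℂ))⁻¹ := by
    field_simp at hcval ⊢
    linear_combination hcval
  rw [hc, this]
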